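/- Let A → B and C → B be ring homomorphisms with A → B surjective with nilpotent kernel. Then for any finitely generated idempotent-lifting-free data, the map Spec(A ×_B C) → Spec A ⊔_{Spec B} Spec C on underlying topological spaces is a homeomorphism onto the pushout; in particular, the prime spectrum of A ×_B C is in natural bijection with the pushout of the spectra. -/

import Mathlib

set_option synthInstance.maxHeartbeats 800000 in
/-- Let `A → B` and `C → B` be ring homomorphisms with `A → B`
surjective with nilpotent kernel.  Then `Spec(A ×_B C) → Spec A ⊔_{Spec B} Spec C`
is a homeomorphism onto the pushout; since `ker(A → B)` is nilpotent,
`Spec B → Spec A` is a homeomorphism, so the pushout is `Spec C` and the claim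
is that the projection `A ×_B C → C` (from the equalizer subring of `A × C`)
induces a homeomorphism `Spec C → Spec(A ×_B C)`. -/
theorem stmt15 (A B C : Type) [CommRing A] [CommRing B] [CommRing C]
    (f : A →+* B) (g : C →+* B) (hf : Function.Surjective f)
    (hnil : ∃ n : ℕ, RingHom.ker f ^ n = ⊥) :
    IsHomeomorph (PrimeSpectrum.comap
      ((RingHom.snd A C).comp
        (RingHom.eqLocus (f.comp (RingHom.fst A C)) (g.comp (RingHom.snd A C))).subtype)) := by
  obtain ⟨n, hn⟩ := hnil
  set R := RingHom.eqLocus (f.comp (RingHom.fst A C)) (g.comp (RingHom.snd A C))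
  set π : R →+* C := (RingHom.snd A C).comp R.subtype
  have hπ : Function.Surjective π := by
    intro c
    obtain ⟨a, ha⟩ := hf (g c)
    exact ⟨⟨(a, c), ha⟩, rfl⟩
  -- every element of ker π is nilpotent
  have hker : ∀ x ∈ RingHom.ker π, IsNilpotent x := by
    rintro ⟨⟨a, c⟩, hx⟩ hc
    have hc0 : c = 0 := hc
    subst hc0
    have ha : f a = 0 := (show f a = g 0 from hx).trans (map_zero g)
    refine ⟨n + 1, ?_⟩
    have h0 : a ^ (n + 1) = 0 := by
      have h1 : a ^ n ∈ RingHom.ker f ^ n := Ideal.pow_mem_pow ha n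
      rw [hn] at h1
      rw [pow_succ, Ideal.mem_bot.mp h1, zero_mul]
    ext <;> simp [h0]
  have hce := PrimeSpectrum.isClosedEmbedding_comap_of_surjective C π hπ
  rw [isHomeomorph_iff_isEmbedding_surjective]
  refine ⟨hce.isEmbedding, ?_⟩
  have hrange := range_comap_of_surjective C π hπ
  intro p
  have hp : p ∈ Set.range (PrimeSpectrum.comap π) := by
    rw [hrange, PrimeSpectrum.mem_zeroLocus]
    intro x hx
    obtain ⟨m, hm⟩ := hker x hx
    exact p.isPrime.mem_of_pow_mem m (hm ▸ p.asIdeal.zero_mem)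
  exact hp
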